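/- arXiv:1806.01671 — 2 statements merged into one kernel-verified Lean document; each statement's English description precedes it below -/
import Mathlib

section
/- Let G be a group acting on a set M, and for a finite subset A ⊆ M let G_(A) denote the pointwise stabiliser of A in G. Suppose that for all finite subsets A, B ⊆ M with |A∖B| = |B∖A| = 1, the subgroup generated by G_(A) and G_(B) equals G_(A∩B). Then for all finite subsets A, B ⊆ M, the subgroup generated by G_(A) and G_(B) equals G_(A∩B). -/
/-- The pointwise stabiliser `G_(A)` of a finite subset `A ⊆ M` in a group `G`
acting on `M`. -/
def fixStab (G : Type*) {M : Type*} [Group G] [MulAction G M] (A : Finset M) :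
    Subgroup G where
  carrier := {g : G | ∀ a ∈ A, g • a = a}
  one_mem' := fun a _ => one_smul G a
  mul_mem' := by
    intro g h hg hh a ha
    rw [mul_smul, hh a ha, hg a ha]
  inv_mem' := by
    intro g hg a ha
    exact inv_smul_eq_iff.mpr (hg a ha).symm

lemma fixStab_anti {G M : Type*} [Group G] [MulAction G M] {A B : Finset M}
    (hAB : A ⊆ B) : fixStab G B ≤ fixStab G A :=
  fun _ hg a ha => hg a (hAB ha)

/-- If the subgroup generated by the pointwise stabilisers `G_(A)` and `G_(B)` equals
`G_(A ∩ B)` whenever `|A ∖ B| = |B ∖ A| = 1`, then the same holds for all finite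
subsets `A, B` of `M`. -/
theorem intersection_of_stabilisers_of_base_case {G M : Type*} [Group G] [MulAction G M]
    [DecidableEq M]
    (h : ∀ A B : Finset M, (A \ B).card = 1 → (B \ A).card = 1 →
      fixStab G A ⊔ fixStab G B = fixStab G (A ∩ B)) :
    ∀ A B : Finset M, fixStab G A ⊔ fixStab G B = fixStab G (A ∩ B) := by
  suffices H : ∀ n (A B : Finset M), (A \ B).card + (B \ A).card ≤ n →
      fixStab G A ⊔ fixStab G B = fixStab G (A ∩ B) by
    intro A B; exact H _ A B le_rfl
  intro n
  induction n with
  | zero =>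
    intro A B hn
    have hAB : A ⊆ B := Finset.sdiff_eq_empty_iff_subset.mp
      (Finset.card_eq_zero.mp (by omega))
    rw [Finset.inter_eq_left.mpr hAB]
    exact sup_eq_left.mpr (fixStab_anti hAB)
  | succ n ih =>
    intro A B hn
    rcases Finset.eq_empty_or_nonempty (A \ B) with hAB | ⟨a, ha⟩
    · have hAB : A ⊆ B := Finset.sdiff_eq_empty_iff_subset.mp hAB
      rw [Finset.inter_eq_left.mpr hAB]
      exact sup_eq_left.mpr (fixStab_anti hAB)
    rcases Finset.eq_empty_or_nonempty (B \ A) with hBA | ⟨b, hb⟩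
    · have hBA : B ⊆ A := Finset.sdiff_eq_empty_iff_subset.mp hBA
      rw [Finset.inter_eq_right.mpr hBA]
      exact sup_eq_right.mpr (fixStab_anti hBA)
    obtain ⟨haA, haB⟩ := Finset.mem_sdiff.mp ha
    obtain ⟨hbB, hbA⟩ := Finset.mem_sdiff.mp hb
    -- basic set identities
    have e1 : A ∩ B.erase b = A ∩ B := by
      ext x; simp only [Finset.mem_inter, Finset.mem_erase]
      exact ⟨fun ⟨h1, _, h3⟩ => ⟨h1, h3⟩, fun ⟨h1, h2⟩ => ⟨h1, fun hx => hbA (hx ▸ h1), h2⟩⟩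
    have e2 : A \ B.erase b = A \ B := by
      ext x; simp only [Finset.mem_sdiff, Finset.mem_erase, not_and]
      constructor
      · rintro ⟨h1, h2⟩
        exact ⟨h1, fun hx => absurd (h2 (fun he => hbA (he ▸ h1))) (absurd hx · )⟩
      · rintro ⟨h1, h2⟩
        exact ⟨h1, fun _ hx => h2 hx⟩
    have e3 : B.erase b \ A = (B \ A).erase b := by
      ext x; simp [Finset.mem_sdiff, Finset.mem_erase]; tauto
    have c3 : ((B \ A).erase b).card = (B \ A).card - 1 := Finset.card_erase_of_mem hb
    -- IH on (A, B.erase b)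
    have h1 : fixStab G A ⊔ fixStab G (B.erase b) = fixStab G (A ∩ B) := by
      rw [← e1]
      refine ih A (B.erase b) ?_
      rw [e2, e3, c3]
      have : 1 ≤ (B \ A).card := Finset.card_pos.mpr ⟨b, hb⟩
      omega
    -- base hypothesis on (B, D), D = insert a (B.erase b)
    set D := insert a (B.erase b) with hD
    have e4 : B \ D = {b} := by
      ext x
      simp only [hD, Finset.mem_sdiff, Finset.mem_insert, Finset.mem_erase,
        Finset.mem_singleton, not_or, not_and]
      constructor
      · rintro ⟨h1, h2, h3⟩
        by_contra hx
        exact (h3 hx) h1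
      · rintro rfl
        exact ⟨hbB, fun he => haB (he ▸ hbB), fun hx => absurd rfl hx⟩
    have e5 : D \ B = {a} := by
      ext x
      simp only [hD, Finset.mem_sdiff, Finset.mem_insert, Finset.mem_erase,
        Finset.mem_singleton]
      constructor
      · rintro ⟨h1 | ⟨_, h1⟩, h2⟩
        · exact h1
        · exact absurd h1 h2
      · rintro rfl
        exact ⟨Or.inl rfl, haB⟩
    have e6 : B ∩ D = B.erase b := by
      ext x
      simp only [hD, Finset.mem_inter, Finset.mem_insert, Finset.mem_erase]
      constructor
      · rintro ⟨h1, h2 | ⟨h2, _⟩⟩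
        · exact absurd (h2 ▸ h1) haB
        · exact ⟨h2, h1⟩
      · rintro ⟨h1, h2⟩
        exact ⟨h2, Or.inr ⟨h1, h2⟩⟩
    have h2 : fixStab G B ⊔ fixStab G D = fixStab G (B.erase b) := by
      rw [← e6]
      exact h B D (by rw [e4]; simp) (by rw [e5]; simp)
    -- fixStab D ≤ fixStab (insert a (A ∩ B))
    have e7 : insert a (A ∩ B) ⊆ D := by
      intro x hx
      rcases Finset.mem_insert.mp hx with rfl | hx
      · exact Finset.mem_insert_self _ _
      · obtain ⟨h1, h2⟩ := Finset.mem_inter.mp hx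
        exact Finset.mem_insert_of_mem (Finset.mem_erase.mpr ⟨fun he => hbA (he ▸ h1), h2⟩)
    have h3 : fixStab G D ≤ fixStab G (insert a (A ∩ B)) := fixStab_anti e7
    -- IH on (A, insert a B)
    have e8 : A ∩ insert a B = insert a (A ∩ B) := by
      ext x
      simp only [Finset.mem_inter, Finset.mem_insert]
      constructor
      · rintro ⟨hxA, rfl | hxB⟩
        · exact Or.inl rfl
        · exact Or.inr ⟨hxA, hxB⟩
      · rintro (rfl | ⟨hxA, hxB⟩)
        · exact ⟨haA, Or.inl rfl⟩
        · exact ⟨hxA, Or.inr hxB⟩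
    have e9 : A \ insert a B = (A \ B).erase a := by
      ext x
      simp only [Finset.mem_sdiff, Finset.mem_insert, Finset.mem_erase, not_or]
      tauto
    have e10 : insert a B \ A = B \ A := by
      ext x
      simp only [Finset.mem_sdiff, Finset.mem_insert]
      constructor
      · rintro ⟨rfl | hx1, hx2⟩
        · exact absurd haA hx2
        · exact ⟨hx1, hx2⟩
      · rintro ⟨hx1, hx2⟩
        exact ⟨Or.inr hx1, hx2⟩
    have h4 : fixStab G A ⊔ fixStab G (insert a B) = fixStab G (insert a (A ∩ B)) := by
      rw [← e8]
      refine ih A (insert a B) ?_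
      rw [e9, e10, Finset.card_erase_of_mem ha]
      have : 1 ≤ (A \ B).card := Finset.card_pos.mpr ⟨a, ha⟩
      omega
    have h5 : fixStab G (insert a B) ≤ fixStab G B :=
      fixStab_anti (Finset.subset_insert _ _)
    -- assemble
    have hDle : fixStab G D ≤ fixStab G A ⊔ fixStab G B :=
      h3.trans (h4 ▸ sup_le_sup_left h5 _)
    rw [← h1, ← h2, ← sup_assoc]
    exact (sup_eq_left.mpr hDle).symm
end

section
/- Let S be a set of triangles satisfying Condition 2 with respect to L' = {R_1, R_2} (ordered R_1 > R_2). Then for all A, B, C ∈ Forb_c(S) with B ⊆ A and B ⊆ C, if A ⊗_B C (with respect to the order R_1 > R_2) is defined then A ⊗_B C ∈ Forb_c(S). In particular, if moreover Forb_c(S) is a semi-free amalgamation class with set of solutions L', then Forb_c(S) is a prioritised semi-free amalgamation class with respect to the order R_1 > R_2. -/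
namespace Paper

variable {L M : Type}

/-- The structure with colouring `r` embeds no triangle from `S`
(triangles identified with the multiset of their three edge colours). -/
def Avoids (r : M → M → L) (S : Set (Multiset L)) : Prop :=
  ∀ a b c : M, a ≠ b → a ≠ c → b ≠ c → ({r a b, r a c, r b c} : Multiset L) ∉ S

/-- The substructure on `T` embeds no triangle from `S`. -/
def AvoidsOn (r : M → M → L) (T : Set M) (S : Set (Multiset L)) : Prop :=
  ∀ a ∈ T, ∀ b ∈ T, ∀ c ∈ T, a ≠ b → a ≠ c → b ≠ c →
    ({r a b, r a c, r b c} : Multiset L) ∉ S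

/-- Colouring the pair `(a,c)` by `R` creates no forbidden triangle over a point of `B`. -/
def Compatible (r : M → M → L) (S : Set (Multiset L)) (B : Set M) (a c : M) (R : L) : Prop :=
  ∀ b ∈ B, ({r a b, r b c, R} : Multiset L) ∉ S

/-- `R` is the greatest relation of `L'` (in the priority order `le`) whose use on the
pair `(a,c)` creates no forbidden triangle over `B`. -/
def PriorityColour (le : L → L → Prop) (r : M → M → L) (S : Set (Multiset L)) (L' : Set L)
    (B : Set M) (a c : M) (R : L) : Prop :=
  (R ∈ L' ∧ Compatible r S B a c R) ∧
    ∀ R' : L, R' ∈ L' → Compatible r S B a c R' → le R' R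

/-- `A ⫫_B C`: the substructure on `A ∪ B ∪ C` is the prioritised semi-free amalgam
`(A ∪ B) ⊗_B (B ∪ C)`. -/
def Indep (le : L → L → Prop) (r : M → M → L) (S : Set (Multiset L)) (L' : Set L)
    (A B C : Set M) : Prop :=
  A ∩ C ⊆ B ∧ ∀ a ∈ A, a ∉ B → ∀ c ∈ C, c ∉ B → PriorityColour le r S L' B a c (r a c)

/-- Whenever the prioritised semi-free amalgam `A ⊗_B C` of members of `Forb_c(S)` is
defined, it lies in `Forb_c(S)`.  (The amalgam is represented by a finite vertex type
`V = A ∪ C` with `B = A ∩ C`, whose cross edges are coloured by the priority rule.) -/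
def AmalgamAvoids (le : L → L → Prop) (S : Set (Multiset L)) (L' : Set L) : Prop :=
  ∀ (V : Type) [Fintype V] (rr : V → V → L) (A C : Set V),
    (∀ a b, rr a b = rr b a) → A ∪ C = Set.univ →
    AvoidsOn rr A S → AvoidsOn rr C S →
    (∀ a ∈ A \ C, ∀ c ∈ C \ A, PriorityColour le rr S L' (A ∩ C) a c (rr a c)) →
    Avoids rr S

/-- The prioritised semi-free amalgam of members of `Forb_c(S)` is always defined. -/
def AmalgamDefined (le : L → L → Prop) (S : Set (Multiset L)) (L' : Set L) : Prop :=
  ∀ (V : Type) [Fintype V] (rr : V → V → L) (A C : Set V),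
    (∀ a b, rr a b = rr b a) → A ∪ C = Set.univ →
    AvoidsOn rr A S → AvoidsOn rr C S →
    ∀ a ∈ A \ C, ∀ c ∈ C \ A, ∃ R : L, PriorityColour le rr S L' (A ∩ C) a c R

/-- `Forb_c(S)` is a prioritised semi-free amalgamation class w.r.t. the order `le` on `L'`. -/
def IsPrioritisedSemiFree (le : L → L → Prop) (S : Set (Multiset L)) (L' : Set L) : Prop :=
  AmalgamDefined le S L' ∧ AmalgamAvoids le S L'

/-- `Forb_c(S)` is a semi-free amalgamation class with set of solutions `L'`. -/
def IsSemiFree (S : Set (Multiset L)) (L' : Set L) : Prop :=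
  ∀ (V : Type) [Fintype V] (rr : V → V → L) (A C : Set V),
    (∀ a b, rr a b = rr b a) → A ∪ C = Set.univ →
    AvoidsOn rr A S → AvoidsOn rr C S →
    ∃ rr' : V → V → L, (∀ a b, rr' a b = rr' b a) ∧ Avoids rr' S ∧
      (∀ a ∈ A, ∀ b ∈ A, rr' a b = rr a b) ∧
      (∀ a ∈ C, ∀ b ∈ C, rr' a b = rr a b) ∧
      (∀ a ∈ A \ C, ∀ c ∈ C \ A, rr' a c ∈ L')

/-- `Forb_c(S)` has the amalgamation property (with joint embedding as the case
of empty intersection); it is then an amalgamation class. -/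
def HasAmalgamation (S : Set (Multiset L)) : Prop :=
  ∀ (V : Type) [Fintype V] (rr : V → V → L) (A C : Set V),
    (∀ a b, rr a b = rr b a) → A ∪ C = Set.univ →
    AvoidsOn rr A S → AvoidsOn rr C S →
    ∃ rr' : V → V → L, (∀ a b, rr' a b = rr' b a) ∧ Avoids rr' S ∧
      (∀ a ∈ A, ∀ b ∈ A, rr' a b = rr a b) ∧
      (∀ a ∈ C, ∀ b ∈ C, rr' a b = rr a b)

/-- `(M, r)` is the Fraïssé limit of `Forb_c(S)`: a countable structure whose complete
edge-colouring avoids `S`, which is homogeneous, and which satisfies the extension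
property with respect to members of `Forb_c(S)`. -/
structure IsLimit (S : Set (Multiset L)) (r : M → M → L) : Prop where
  countable : Countable M
  symm : ∀ a b : M, r a b = r b a
  avoids : Avoids r S
  extension : ∀ (n : ℕ) (c : Fin n → Fin n → L), (∀ i j, c i j = c j i) →
    Avoids c S → ∀ (A : Finset (Fin n)) (f : Fin n → M), Set.InjOn f ↑A →
    (∀ i ∈ A, ∀ j ∈ A, i ≠ j → r (f i) (f j) = c i j) →
    ∃ g : Fin n ↪ M, (∀ i ∈ A, g i = f i) ∧ ∀ i j : Fin n, i ≠ j → r (g i) (g j) = c i j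
  homogeneous : ∀ (A : Finset M) (f : M → M), Set.InjOn f ↑A →
    (∀ a ∈ A, ∀ b ∈ A, r (f a) (f b) = r a b) →
    ∃ g : Equiv.Perm M, (∀ x y, r (g x) (g y) = r x y) ∧ ∀ a ∈ A, g a = f a

/-- The automorphism group of the coloured structure `(M, r)`, as a subgroup of `Perm M`. -/
def aut (r : M → M → L) : Subgroup (Equiv.Perm M) where
  carrier := {g : Equiv.Perm M | ∀ a b, r (g a) (g b) = r a b}
  one_mem' := fun _ _ => rfl
  mul_mem' := by
    intro g h hg hh a b
    have : r (g (h a)) (g (h b)) = r a b := (hg (h a) (h b)).trans (hh a b)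
    simpa [Equiv.Perm.mul_apply] using this
  inv_mem' := by
    intro g hg a b
    have := hg (g⁻¹ a) (g⁻¹ b)
    simpa using this.symm

/-- The pointwise stabiliser `G_(X)` of `X` inside `Aut(M, r)`. -/
def pstab (r : M → M → L) (X : Set M) : Subgroup (aut r) where
  carrier := {g | ∀ x ∈ X, (g : Equiv.Perm M) x = x}
  one_mem' := fun _ _ => rfl
  mul_mem' := by
    intro g h hg hh x hx
    have : (g : Equiv.Perm M) ((h : Equiv.Perm M) x) = x := by rw [hh x hx, hg x hx]
    simpa [Equiv.Perm.mul_apply] using this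
  inv_mem' := by
    intro g hg x hx
    have := hg x hx
    simp only [Subgroup.coe_inv]
    conv_lhs => rw [← this]
    simp

/-- The 1-type of `a` over `X`: its orbit under the pointwise stabiliser of `X`. -/
def typeOf (r : M → M → L) (X : Set M) (a : M) : Set M :=
  {b | ∃ g : Equiv.Perm M, g ∈ aut r ∧ (∀ x ∈ X, g x = x) ∧ g a = b}

/-- Two `n`-tuples have the same type over `X`: they lie in the same orbit under the
pointwise stabiliser of `X`. -/
def SameTypeFn (r : M → M → L) (X : Set M) {n : ℕ} (a b : Fin n → M) : Prop :=
  ∃ g : Equiv.Perm M, g ∈ aut r ∧ (∀ x ∈ X, g x = x) ∧ ∀ i, g (a i) = b i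

/-- `f` moves almost maximally: every 1-type over every finite set `X` has a
realisation `b` with `b ⫫_X f(b)`. -/
def MovesAlmostMaximally (le : L → L → Prop) (r : M → M → L) (S : Set (Multiset L))
    (L' : Set L) (f : Equiv.Perm M) : Prop :=
  ∀ (X : Finset M) (a : M), ∃ b ∈ typeOf r ↑X a, Indep le r S L' {b} ↑X {f b}

/-- The commutator `[x, y] = x⁻¹y⁻¹xy`. -/
def Comm {G : Type*} [Group G] (x y : G) : G := x⁻¹ * y⁻¹ * x * y

/-- `le` is a linear order on the subset `L'`. -/
def IsLinearOn (le : L → L → Prop) (L' : Set L) : Prop :=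
  (∀ a ∈ L', le a a) ∧
  (∀ a ∈ L', ∀ b ∈ L', ∀ c ∈ L', le a b → le b c → le a c) ∧
  (∀ a ∈ L', ∀ b ∈ L', le a b → le b a → a = b) ∧
  (∀ a ∈ L', ∀ b ∈ L', le a b ∨ le b a)

/-- `R1 > R2` are the two greatest relations of `L'` in the order `le`. -/
def TwoGreatest (le : L → L → Prop) (L' : Set L) (R1 R2 : L) : Prop :=
  R1 ∈ L' ∧ R2 ∈ L' ∧ R2 ≠ R1 ∧ le R2 R1 ∧
    (∀ R ∈ L', le R R1) ∧ ∀ R ∈ L', R ≠ R1 → le R R2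

/-- Condition A (i): no triangle of `S` contains two occurrences of `R1`,
or an `R1` together with an `R2`. -/
def CondA1 (S : Set (Multiset L)) (R1 R2 : L) : Prop :=
  ∀ t ∈ S, ¬ (({R1, R1} : Multiset L) ≤ t) ∧ ¬ (({R1, R2} : Multiset L) ≤ t)

/-- Condition A (ii): if `a ⫫_{{b} ∪ B} c` and `r(a,b) ∈ L'` then `a ⫫_B c`. -/
def CondA2 (le : L → L → Prop) (r : M → M → L) (S : Set (Multiset L)) (L' : Set L) : Prop :=
  ∀ (a b c : M) (B : Finset M), r a b ∈ L' →
    Indep le r S L' {a} (insert b ↑B) {c} → Indep le r S L' {a} ↑B {c}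

/-- Condition 1: `S` contains no triangle having two of its three edges in `L'`. -/
def Cond1 (S : Set (Multiset L)) (L' : Set L) : Prop :=
  ∀ t ∈ S, ∀ x ∈ L', ∀ y ∈ L', ¬ (({x, y} : Multiset L) ≤ t)

/-- Condition 2 with respect to `L' = {R1, R2}` (ordered `R1 > R2`) and the subsets
`Lst = L*` and `Lhat = L̂`. -/
def Cond2 (S : Set (Multiset L)) (R1 R2 : L) (Lst Lhat : Set L) : Prop :=
  R1 ≠ R2 ∧ R1 ∉ Lst ∧ R2 ∉ Lst ∧ R1 ∉ Lhat ∧ R2 ∉ Lhat ∧ (∀ x ∈ Lst, x ∉ Lhat) ∧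
  (∀ R' : L, R' ∉ Lhat → R' ≠ R2 → ∀ Ra ∈ Lst, ∀ Rb ∈ Lst,
    ({R', Ra, Rb} : Multiset L) ∈ S) ∧
  (∀ Ra ∈ Lst, ({R2, R2, Ra} : Multiset L) ∈ S) ∧
  (∀ Rh ∈ Lhat, ∀ Ra ∈ Lst, ({R2, Rh, Ra} : Multiset L) ∈ S) ∧
  (∀ t ∈ S, R1 ∈ t → ∃ Ra ∈ Lst, ∃ Rb ∈ Lst, t = ({R1, Ra, Rb} : Multiset L)) ∧
  (∀ t ∈ S, ({R2, R2} : Multiset L) ≤ t → ∃ Ra ∈ Lst, t = ({R2, R2, Ra} : Multiset L))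


section AuxMs

variable {L : Type}

lemma ms213 (x y z : L) : ({x, y, z} : Multiset L) = {y, x, z} := Multiset.cons_swap x y {z}

lemma ms132 (x y z : L) : ({x, y, z} : Multiset L) = {x, z, y} := by
  show x ::ₘ y ::ₘ z ::ₘ 0 = x ::ₘ z ::ₘ y ::ₘ 0
  rw [Multiset.cons_swap y z]

lemma ms231 (x y z : L) : ({x, y, z} : Multiset L) = {y, z, x} :=
  (ms213 x y z).trans (ms132 y x z)

lemma ms312 (x y z : L) : ({x, y, z} : Multiset L) = {z, x, y} :=
  (ms132 x y z).trans (ms213 x z y)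

lemma ms321 (x y z : L) : ({x, y, z} : Multiset L) = {z, y, x} :=
  (ms231 x y z).trans (ms213 y z x)

lemma helperR1 {S : Set (Multiset L)} {R1 : L} {Lst : Set L}
    (hcR1 : ∀ t ∈ S, R1 ∈ t → ∃ Ra ∈ Lst, ∃ Rb ∈ Lst, t = ({R1, Ra, Rb} : Multiset L))
    {x y : L} (h : ({x, y, R1} : Multiset L) ∈ S) : x ∈ Lst ∧ y ∈ Lst := by
  obtain ⟨Ra, hRa, Rb, hRb, ht⟩ := hcR1 _ h (by simp)
  rw [ms321] at ht
  have ht' : R1 ::ₘ ({y, x} : Multiset L) = R1 ::ₘ ({Ra, Rb} : Multiset L) := ht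
  rw [Multiset.cons_inj_right] at ht'
  constructor
  · have hx : x ∈ ({Ra, Rb} : Multiset L) := by rw [← ht']; simp
    rcases (by simpa using hx : x = Ra ∨ x = Rb) with rfl | rfl
    exacts [hRa, hRb]
  · have hy : y ∈ ({Ra, Rb} : Multiset L) := by rw [← ht']; simp
    rcases (by simpa using hy : y = Ra ∨ y = Rb) with rfl | rfl
    exacts [hRa, hRb]

lemma helperLL {S : Set (Multiset L)} {R1 R2 : L} {Lst Lhat : Set L}
    (h2 : Cond2 S R1 R2 Lst Lhat) {u v w : L}
    (h : ({u, v, w} : Multiset L) ∈ S) (hu : u = R1 ∨ u = R2) (hw : w = R1 ∨ w = R2) :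
    u = R2 ∧ w = R2 ∧ v ∈ Lst := by
  obtain ⟨hR12, hR1st, hR2st, hR1h, hR2h, hsth, hc7, hc8, hc9, hcR1, hcR2⟩ := h2
  rcases hw with rfl | rfl
  · exfalso
    have := (helperR1 hcR1 h).1
    rcases hu with rfl | rfl
    · exact hR1st this
    · exact hR2st this
  · rcases hu with rfl | rfl
    · exfalso
      rw [ms231] at h
      exact hR2st (helperR1 hcR1 h).2
    · refine ⟨rfl, rfl, ?_⟩
      rw [ms132] at h
      obtain ⟨Ra, hRa, ht⟩ := hcR2 _ h (by
        show ({u, u} : Multiset L) ≤ u ::ₘ u ::ₘ {v}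
        exact Multiset.cons_le_cons _ (Multiset.cons_le_cons _ (Multiset.zero_le _)))
      have hmem : Ra ∈ ({u, u, v} : Multiset L) := by rw [ht]; simp
      have hne : Ra ≠ u := fun h' => hR2st (h' ▸ hRa)
      have hv : Ra = v := by
        simp only [Multiset.insert_eq_cons, Multiset.mem_cons, Multiset.mem_singleton] at hmem
        tauto
      exact hv ▸ hRa

end AuxMs

/-- **Lemma.** If `S` satisfies Condition 2 with respect to `L' = {R1, R2}` (ordered
`R1 > R2`), then the prioritised semi-free amalgam of members of `Forb_c(S)` with
respect to this order, when defined, lies in `Forb_c(S)`; in particular, if moreover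
`Forb_c(S)` is a semi-free amalgamation class with set of solutions `{R1, R2}`, then
`Forb_c(S)` is a prioritised semi-free amalgamation class with respect to
`R1 > R2`. -/
theorem cond2_prioritised_semi_free {L : Type}
    (S : Set (Multiset L)) (R1 R2 : L) (Lst Lhat : Set L)
    (h2 : Cond2 S R1 R2 Lst Lhat)
    (hL' : ({R1, R2} : Set L) ≠ Set.univ)
    (le : L → L → Prop) (hle : IsLinearOn le {R1, R2}) (hord : le R2 R1) :
    AmalgamAvoids le S {R1, R2} ∧
      (IsSemiFree S {R1, R2} → IsPrioritisedSemiFree le S {R1, R2}) := by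
  have hR12 := h2.1
  have hR1st := h2.2.1
  have hR2st := h2.2.2.1
  have hc7 := h2.2.2.2.2.2.2.1
  have hc8 := h2.2.2.2.2.2.2.2.1
  have hc9 := h2.2.2.2.2.2.2.2.2.1
  have hcR1 := h2.2.2.2.2.2.2.2.2.2.1
  have hR1L : R1 ∈ ({R1, R2} : Set L) := Set.mem_insert _ _
  have hR2L : R2 ∈ ({R1, R2} : Set L) := Set.mem_insert_of_mem _ rfl
  have hAv : AmalgamAvoids le S {R1, R2} := by
    intro V _ rr A C hs huniv hA hC hcross
    have hUA : ∀ x : V, x ∉ A → x ∈ C := by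
      intro x hx
      have : x ∈ A ∪ C := huniv ▸ Set.mem_univ x
      simp only [Set.mem_union] at this
      tauto
    have hUC : ∀ x : V, x ∉ C → x ∈ A := by
      intro x hx
      have : x ∈ A ∪ C := huniv ▸ Set.mem_univ x
      simp only [Set.mem_union] at this
      tauto
    have hin : ∀ a c : V, PriorityColour le rr S {R1, R2} (A ∩ C) a c (rr a c) →
        rr a c = R1 ∨ rr a c = R2 := by
      intro a c P
      have := P.1.1
      simpa using this
    have key : ∀ x y z : V, x ≠ y → x ≠ z → y ≠ z → x ∉ C → z ∉ A →
        ({rr x y, rr x z, rr y z} : Multiset L) ∈ S → False := by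
      intro x y z hxy hxz hyz hxC hzA hm
      have hxA : x ∈ A := hUC x hxC
      have hzC : z ∈ C := hUA z hzA
      have Pxz := hcross x ⟨hxA, hxC⟩ z ⟨hzC, hzA⟩
      by_cases hyA : y ∈ A
      · by_cases hyC : y ∈ C
        · -- y ∈ A ∩ C : directly forbidden by compatibility of the cross edge (x,z)
          have hcom := Pxz.1.2 y ⟨hyA, hyC⟩
          rw [ms132] at hm
          exact hcom hm
        · -- y ∈ A \ C : two cross edges (x,z), (y,z)
          have Pyz := hcross y ⟨hyA, hyC⟩ z ⟨hzC, hzA⟩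
          have hm' := hm
          rw [ms213] at hm'
          -- hm' : {rr x z, rr x y, rr y z} ∈ S
          obtain ⟨hu, hw, hvLst⟩ := helperLL h2 hm' (hin _ _ Pxz) (hin _ _ Pyz)
          -- hu : rr x z = R2, hw : rr y z = R2, hvLst : rr x y ∈ Lst
          have hnc : ¬ Compatible rr S (A ∩ C) x z R1 := by
            intro hcomp
            have := Pxz.2 R1 hR1L hcomp
            rw [hu] at this
            exact hR12 (hle.2.2.1 R1 hR1L R2 hR2L this hord)
          have hex : ∃ b1 ∈ A ∩ C, ({rr x b1, rr b1 z, R1} : Multiset L) ∈ S := by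
            by_contra hno
            push_neg at hno
            exact hnc fun b hb => hno b hb
          obtain ⟨b1, hb1, hb1S⟩ := hex
          obtain ⟨hxb1, hb1z⟩ := helperR1 hcR1 hb1S
          have hcomp2 := Pyz.1.2 b1 hb1
          rw [hw] at hcomp2
          -- hcomp2 : {rr y b1, rr b1 z, R2} ∉ S
          have hnh : rr y b1 ∉ Lhat := by
            intro hh
            apply hcomp2
            rw [show ({rr y b1, rr b1 z, R2} : Multiset L) = {R2, rr y b1, rr b1 z} from
              (ms231 _ _ _).symm]
            exact hc9 _ hh _ hb1z
          have hne : rr y b1 ≠ R2 := by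
            intro hh
            apply hcomp2
            rw [hh, show ({R2, rr b1 z, R2} : Multiset L) = {R2, R2, rr b1 z} from
              (ms132 _ _ _).symm]
            exact hc8 _ hb1z
          have hS7 : ({rr y b1, rr x y, rr x b1} : Multiset L) ∈ S :=
            hc7 _ hnh hne _ hvLst _ hxb1
          have hd1 : x ≠ b1 := fun h => hxC (h ▸ hb1.2)
          have hd2 : y ≠ b1 := fun h => hyC (h ▸ hb1.2)
          apply hA x hxA y hyA b1 hb1.1 hxy hd1 hd2
          rw [ms312]
          exact hS7
      · -- y ∈ C \ A : two cross edges (x,y), (x,z)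
        have hyC : y ∈ C := hUA y hyA
        have Pxy := hcross x ⟨hxA, hxC⟩ y ⟨hyC, hyA⟩
        have hm' := hm
        rw [ms132] at hm'
        -- hm' : {rr x y, rr y z, rr x z} ∈ S
        obtain ⟨hu, hw, hvLst⟩ := helperLL h2 hm' (hin _ _ Pxy) (hin _ _ Pxz)
        -- hu : rr x y = R2, hw : rr x z = R2, hvLst : rr y z ∈ Lst
        have hnc : ¬ Compatible rr S (A ∩ C) x y R1 := by
          intro hcomp
          have := Pxy.2 R1 hR1L hcomp
          rw [hu] at this
          exact hR12 (hle.2.2.1 R1 hR1L R2 hR2L this hord)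
        have hex : ∃ b1 ∈ A ∩ C, ({rr x b1, rr b1 y, R1} : Multiset L) ∈ S := by
          by_contra hno
          push_neg at hno
          exact hnc fun b hb => hno b hb
        obtain ⟨b1, hb1, hb1S⟩ := hex
        obtain ⟨hxb1, hb1y⟩ := helperR1 hcR1 hb1S
        have hcomp2 := Pxz.1.2 b1 hb1
        rw [hw] at hcomp2
        -- hcomp2 : {rr x b1, rr b1 z, R2} ∉ S
        have hnh : rr b1 z ∉ Lhat := by
          intro hh
          apply hcomp2
          rw [show ({rr x b1, rr b1 z, R2} : Multiset L) = {R2, rr b1 z, rr x b1} from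
            (ms321 _ _ _).symm]
          exact hc9 _ hh _ hxb1
        have hne : rr b1 z ≠ R2 := by
          intro hh
          apply hcomp2
          rw [hh, show ({rr x b1, R2, R2} : Multiset L) = {R2, R2, rr x b1} from
            (ms321 _ _ _).symm]
          exact hc8 _ hxb1
        have hS7 : ({rr b1 z, rr b1 y, rr y z} : Multiset L) ∈ S :=
          hc7 _ hnh hne _ hb1y _ hvLst
        have hd1 : b1 ≠ y := fun h => hyA (h ▸ hb1.1)
        have hd2 : b1 ≠ z := fun h => hzA (h ▸ hb1.1)
        apply hC b1 hb1.2 y hyC z hzC hd1 hd2 hyz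
        rw [ms213]
        exact hS7
    intro a b c hab hac hbc hm
    by_cases haA : a ∈ A
    · by_cases hbA : b ∈ A
      · by_cases hcA : c ∈ A
        · exact hA a haA b hbA c hcA hab hac hbc hm
        · by_cases haC : a ∈ C
          · by_cases hbC : b ∈ C
            · exact hC a haC b hbC c (hUA c hcA) hab hac hbc hm
            · -- b ∉ C, c ∉ A
              refine key b a c hab.symm hbc hac hbC hcA ?_
              have e : ({rr b a, rr b c, rr a c} : Multiset L) = {rr a b, rr a c, rr b c} := by
                rw [hs b a, ms132 (rr a b) (rr b c) (rr a c)]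
              rw [e]; exact hm
          · exact key a b c hab hac hbc haC hcA hm
      · by_cases haC : a ∈ C
        · by_cases hcC : c ∈ C
          · exact hC a haC b (hUA b hbA) c hcC hab hac hbc hm
          · -- c ∉ C, b ∉ A
            refine key c a b hac.symm hbc.symm hab hcC hbA ?_
            have e : ({rr c a, rr c b, rr a b} : Multiset L) = {rr a b, rr a c, rr b c} := by
              rw [hs c a, hs c b, ← ms231 (rr a b) (rr a c) (rr b c)]
            rw [e]; exact hm
        · -- a ∉ C, b ∉ A
          refine key a c b hac hab hbc.symm haC hbA ?_
          have e : ({rr a c, rr a b, rr c b} : Multiset L) = {rr a b, rr a c, rr b c} := by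
            rw [hs c b, ← ms213 (rr a b) (rr a c) (rr b c)]
          rw [e]; exact hm
    · -- a ∉ A
      by_cases hbC : b ∈ C
      · by_cases hcC : c ∈ C
        · exact hC a (hUA a haA) b hbC c hcC hab hac hbc hm
        · -- c ∉ C, a ∉ A
          refine key c b a hbc.symm hac.symm hab.symm hcC haA ?_
          have e : ({rr c b, rr c a, rr b a} : Multiset L) = {rr a b, rr a c, rr b c} := by
            rw [hs c b, hs c a, hs b a, ← ms321 (rr a b) (rr a c) (rr b c)]
          rw [e]; exact hm
      · -- b ∉ C, a ∉ A
        refine key b c a hbc hab.symm hac.symm hbC haA ?_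
        have e : ({rr b c, rr b a, rr c a} : Multiset L) = {rr a b, rr a c, rr b c} := by
          rw [hs b a, hs c a, ← ms312 (rr a b) (rr a c) (rr b c)]
        rw [e]; exact hm
  refine ⟨hAv, fun hsf => ⟨?_, hAv⟩⟩
  intro V _ rr A C hs huniv hA hC a ha c hc
  obtain ⟨rr', hs', hav', hgA, hgC, hcrL⟩ := hsf V rr A C hs huniv hA hC
  obtain ⟨haA, haC⟩ := ha
  obtain ⟨hcC, hcA⟩ := hc
  have hac : a ≠ c := fun h => hcA (h ▸ haA)
  have hRc : rr' a c = R1 ∨ rr' a c = R2 := by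
    simpa using hcrL a ⟨haA, haC⟩ c ⟨hcC, hcA⟩
  have hcompat : Compatible rr S (A ∩ C) a c (rr' a c) := by
    intro b hb hmem
    have hab : a ≠ b := fun h => haC (h ▸ hb.2)
    have hbc : b ≠ c := fun h => hcA (h ▸ hb.1)
    apply hav' a b c hab hac hbc
    rw [hgA a haA b hb.1, hgC b hb.2 c hcC, ms132]
    exact hmem
  by_cases hR1c : Compatible rr S (A ∩ C) a c R1
  · refine ⟨R1, ⟨hR1L, hR1c⟩, ?_⟩
    intro R' hR' _
    simp only [Set.mem_insert_iff, Set.mem_singleton_iff] at hR'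
    rcases hR' with rfl | rfl
    · exact hle.1 _ hR1L
    · exact hord
  · have hR2c : rr' a c = R2 := by
      rcases hRc with h | h
      · exact absurd (h ▸ hcompat) hR1c
      · exact h
    rw [hR2c] at hcompat
    refine ⟨R2, ⟨hR2L, hcompat⟩, ?_⟩
    intro R' hR' hcR'
    simp only [Set.mem_insert_iff, Set.mem_singleton_iff] at hR'
    rcases hR' with rfl | rfl
    · exact absurd hcR' hR1c
    · exact hle.1 _ hR2L

end Paper
end
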